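/- For q in C not 0 and not a root of unity, with [m] = (q^m - q^{-m})/(q - q^{-1}) and d_{n,p} = binom(n,p) - binom(n,p-1), the quantity D_{n,p} = prod_{j=1}^{p} ([n-2p+1+j]/[j])^{d_{n,p-j}} satisfies the recursion D_{n,p} = ([n-2p+2]/[n-2p+1])^{d_{n-1,p-1}} * D_{n-1,p} * D_{n-1,p-1}, with D_{n,0} = 1 and D_{2p-1,p} = 1. -/

import Mathlib

open scoped Classical

/-- The `q`-number `[m] = (q^m - q^{-m})/(q - q⁻¹)`, with `[m] = m q^{m-1}`
when `q = ±1`. -/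
noncomputable def qnum (q : ℂ) (m : ℤ) : ℂ :=
  if q = 1 ∨ q = -1 then (m : ℂ) * q ^ (m - 1)
  else (q ^ m - q ^ (-m)) / (q - q⁻¹)

/-- `d_{n,p} = binom(n,p) - binom(n,p-1)`, with `binom(n,-1) = 0`. -/
def dd (n k : ℕ) : ℕ := n.choose k - (if k = 0 then 0 else n.choose (k - 1))

/-- The Gram determinant `D_{n,p} = ∏_{j=1}^p ([n-2p+1+j]/[j])^{d_{n,p-j}}`. -/
noncomputable def Ddet (q : ℂ) (n p : ℕ) : ℂ :=
  ∏ j ∈ Finset.Icc 1 p,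
    (qnum q ((n : ℤ) - 2 * p + 1 + (j : ℤ)) / qnum q (j : ℤ)) ^ (dd n (p - j))

section aux

variable {q : ℂ} (hq : q ≠ 0) (hroot : ∀ k : ℕ, 0 < k → q ^ k ≠ 1)

include hq hroot in
lemma zpow_ne_one' : ∀ m : ℤ, m ≠ 0 → q ^ m ≠ 1 := by
  intro m hm h1
  rcases lt_trichotomy m 0 with h | h | h
  · have h2 : q ^ (-m) = (q ^ m)⁻¹ := zpow_neg q m
    rw [h1, inv_one] at h2
    rw [show (-m) = ((-m).toNat : ℤ) by omega, zpow_natCast] at h2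
    rename' h2 => this
    exact hroot (-m).toNat (by omega) this
  · exact hm h
  · rw [show m = (m.toNat : ℤ) by omega, zpow_natCast] at h1
    exact hroot m.toNat (by omega) h1

include hq hroot in
lemma qnum_ne_zero : ∀ m : ℤ, m ≠ 0 → qnum q m ≠ 0 := by
  intro m hm
  have h1 : q ≠ 1 := fun h => hroot 1 one_pos (by simp [h])
  have h2 : q ≠ -1 := fun h => hroot 2 two_pos (by simp [h])
  rw [qnum, if_neg (by tauto)]
  apply div_ne_zero
  · rw [sub_ne_zero]
    intro h
    have : q ^ (2 * m) = 1 := by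
      rw [two_mul, zpow_add₀ hq]
      nth_rewrite 2 [h]
      rw [← zpow_add₀ hq]
      simp
    exact zpow_ne_one' hq hroot (2 * m) (by omega) this
  · rw [sub_ne_zero]
    intro h
    have : q ^ (2 : ℕ) = 1 := by
      rw [pow_two]
      nth_rewrite 2 [h]
      field_simp
    exact hroot 2 two_pos this

lemma Ddet_range (q : ℂ) (n p : ℕ) :
    Ddet q n p = ∏ i ∈ Finset.range p,
      (qnum q ((n : ℤ) - 2 * p + 2 + i) / qnum q ((i : ℤ) + 1)) ^ (dd n (p - 1 - i)) := by
  rw [Ddet, show Finset.Icc 1 p = Finset.Ico 1 (p + 1) by rfl,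
    Finset.prod_Ico_eq_prod_range]
  simp only [Nat.add_sub_cancel]
  refine Finset.prod_congr rfl fun i hi => ?_
  have h1 : p - (1 + i) = p - 1 - i := by omega
  rw [h1]
  congr 2 <;> push_cast <;> ring

lemma dd_pascal {n k : ℕ} (hk : 1 ≤ k) (hn : 2 * k ≤ n) :
    dd n k = dd (n - 1) k + dd (n - 1) (k - 1) := by
  obtain ⟨m, rfl⟩ : ∃ m, n = m + 1 := ⟨n - 1, by omega⟩
  obtain ⟨l, rfl⟩ : ∃ l, k = l + 1 := ⟨k - 1, by omega⟩
  simp only [dd, Nat.add_sub_cancel]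
  have hP1 : (m + 1).choose (l + 1) = m.choose l + m.choose (l + 1) :=
    Nat.choose_succ_succ' m l
  have hmono : ∀ r : ℕ, r < m / 2 ∨ 2 * r + 1 = m → m.choose r ≤ m.choose (r + 1) := by
    intro r hr
    rcases hr with hr | hr
    · exact Nat.choose_le_succ_of_lt_half_left hr
    · have h3 := Nat.choose_symm (n := m) (k := r + 1) (by omega)
      rw [show m - (r + 1) = r by omega] at h3
      omega
  rcases Nat.eq_zero_or_pos l with rfl | hl
  · simp [dd, Nat.choose_one_right, Nat.choose_zero_right]
    omega
  · simp only [if_neg (show l + 1 ≠ 0 by omega), if_neg (show l ≠ 0 by omega)]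
    have hP2 : (m + 1).choose l = m.choose (l - 1) + m.choose l := by
      obtain ⟨s, rfl⟩ : ∃ s, l = s + 1 := ⟨l - 1, by omega⟩
      simpa [Nat.add_comm] using Nat.choose_succ_succ' m s
    have h1 : m.choose l ≤ m.choose (l + 1) := hmono l (by omega)
    have h2 : m.choose (l - 1) ≤ m.choose l := by
      have := hmono (l - 1) (by omega)
      rwa [show l - 1 + 1 = l by omega] at this
    omega

lemma dd_zero (n : ℕ) : dd n 0 = 1 := by simp [dd]

end aux

/-- For `q` neither zero nor a root of unity, the Gram determinants satisfy
`D_{n,p} = ([n-2p+2]/[n-2p+1])^{d_{n-1,p-1}} D_{n-1,p} D_{n-1,p-1}`, with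
`D_{n,0} = 1` and `D_{2p-1,p} = 1`. -/
theorem stmt_8 (q : ℂ) (hq : q ≠ 0) (hroot : ∀ k : ℕ, 0 < k → q ^ k ≠ 1) :
    (∀ n : ℕ, Ddet q n 0 = 1) ∧
    (∀ p : ℕ, 1 ≤ p → Ddet q (2 * p - 1) p = 1) ∧
    (∀ n p : ℕ, 1 ≤ n → 1 ≤ p → 2 * p ≤ n →
      Ddet q n p =
        (qnum q ((n : ℤ) - 2 * p + 2) / qnum q ((n : ℤ) - 2 * p + 1)) ^ (dd (n - 1) (p - 1)) *
          Ddet q (n - 1) p * Ddet q (n - 1) (p - 1)) := by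
  have hqz := qnum_ne_zero hq hroot
  refine ⟨fun n => by simp [Ddet], fun p hp => ?_, fun n p hn hp hpn => ?_⟩
  · rw [Ddet]
    apply Finset.prod_eq_one
    intro j hj
    rw [Finset.mem_Icc] at hj
    have h1 : ((2 * p - 1 : ℕ) : ℤ) - 2 * p + 1 + (j : ℤ) = (j : ℤ) := by
      push_cast [Nat.sub_le, hp]
      omega
    rw [h1, div_self (hqz _ (by omega)), one_pow]
  · -- main recursion
    set N : ℕ → ℂ := fun k => qnum q ((n : ℤ) - 2 * p + k) with hNdef
    set B : ℕ → ℂ := fun i => qnum q ((i : ℤ) + 1) with hBdef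
    have hNz : ∀ k : ℕ, 1 ≤ k → N k ≠ 0 := fun k hk => hqz _ (by omega)
    have hBz : ∀ i : ℕ, B i ≠ 0 := fun i => hqz _ (by omega)
    have hL : Ddet q n p
        = ∏ i ∈ Finset.range p, (N (i + 2) / B i) ^ (dd n (p - 1 - i)) := by
      rw [Ddet_range]
      refine Finset.prod_congr rfl fun i hi => ?_
      have : (n : ℤ) - 2 * p + 2 + i = (n : ℤ) - 2 * p + ((i + 2 : ℕ) : ℤ) := by
        push_cast; ring
      rw [this]
    have hR1 : Ddet q (n - 1) p
        = ∏ i ∈ Finset.range p, (N (i + 1) / B i) ^ (dd (n - 1) (p - 1 - i)) := by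
      rw [Ddet_range]
      refine Finset.prod_congr rfl fun i hi => ?_
      have : ((n - 1 : ℕ) : ℤ) - 2 * p + 2 + i = (n : ℤ) - 2 * p + ((i + 1 : ℕ) : ℤ) := by
        push_cast [hn]; ring
      rw [this]
    have hR2 : Ddet q (n - 1) (p - 1)
        = ∏ i ∈ Finset.range (p - 1), (N (i + 3) / B i) ^ (dd (n - 1) (p - 2 - i)) := by
      rw [Ddet_range]
      refine Finset.prod_congr rfl fun i hi => ?_
      have h1 : ((n - 1 : ℕ) : ℤ) - 2 * (p - 1 : ℕ) + 2 + i
          = (n : ℤ) - 2 * p + ((i + 3 : ℕ) : ℤ) := by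
        push_cast [hn, hp]; ring
      have h2 : p - 1 - 1 - i = p - 2 - i := by omega
      rw [h1, h2]
    have hPre : qnum q ((n : ℤ) - 2 * p + 2) / qnum q ((n : ℤ) - 2 * p + 1) = N 2 / N 1 := by
      simp [hNdef]
    rw [hL, hR1, hR2, hPre]
    obtain ⟨m, rfl⟩ : ∃ m, p = m + 1 := ⟨p - 1, by omega⟩
    simp only [Nat.add_sub_cancel]
    have hidx : ∀ i : ℕ, m + 1 - 2 - i = m - 1 - i := fun i => by omega
    simp only [hidx]
    -- Step A : split the exponents via the Pascal identity
    have stepA : ∏ i ∈ Finset.range (m + 1), (N (i + 2) / B i) ^ (dd n (m - i))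
        = (∏ i ∈ Finset.range (m + 1), (N (i + 2) / B i) ^ (dd (n - 1) (m - i)))
          * ∏ i ∈ Finset.range m, (N (i + 2) / B i) ^ (dd (n - 1) (m - 1 - i)) := by
      have : ∏ i ∈ Finset.range (m + 1), (N (i + 2) / B i) ^ (dd n (m - i))
          = ∏ i ∈ Finset.range (m + 1),
              ((N (i + 2) / B i) ^ (dd (n - 1) (m - i))
                * (N (i + 2) / B i) ^ (if i < m then dd (n - 1) (m - 1 - i) else 0)) := by
        refine Finset.prod_congr rfl fun i hi => ?_
        rw [Finset.mem_range] at hi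
        rcases lt_or_ge i m with him | him
        · rw [if_pos him, ← pow_add]
          congr 1
          rw [dd_pascal (n := n) (k := m - i) (by omega) (by omega),
            show m - i - 1 = m - 1 - i by omega]
        · rw [if_neg (by omega), pow_zero, mul_one, show m - i = 0 by omega]
          simp only [dd_zero]
      rw [this, Finset.prod_mul_distrib]
      congr 1
      rw [Finset.prod_range_succ, if_neg (lt_irrefl m), pow_zero, mul_one]
      refine Finset.prod_congr rfl fun i hi => ?_
      rw [Finset.mem_range] at hi
      rw [if_pos hi]
    -- Step B : factor N(i+2)/B i = (N(i+2)/N(i+1)) * (N(i+1)/B i)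
    have stepB : ∏ i ∈ Finset.range (m + 1), (N (i + 2) / B i) ^ (dd (n - 1) (m - i))
        = (∏ i ∈ Finset.range (m + 1), (N (i + 2) / N (i + 1)) ^ (dd (n - 1) (m - i)))
          * ∏ i ∈ Finset.range (m + 1), (N (i + 1) / B i) ^ (dd (n - 1) (m - i)) := by
      rw [← Finset.prod_mul_distrib]
      refine Finset.prod_congr rfl fun i hi => ?_
      rw [← mul_pow]
      congr 1
      rw [div_mul_div_comm, mul_comm (N (i + 1)) (B i), ← div_mul_div_comm,
        div_self (hNz (i + 1) (by omega)), mul_one]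
    -- Step C : factor N(i+2)/B i = (N(i+2)/N(i+3)) * (N(i+3)/B i)
    have stepC : ∏ i ∈ Finset.range m, (N (i + 2) / B i) ^ (dd (n - 1) (m - 1 - i))
        = (∏ i ∈ Finset.range m, (N (i + 2) / N (i + 3)) ^ (dd (n - 1) (m - 1 - i)))
          * ∏ i ∈ Finset.range m, (N (i + 3) / B i) ^ (dd (n - 1) (m - 1 - i)) := by
      rw [← Finset.prod_mul_distrib]
      refine Finset.prod_congr rfl fun i hi => ?_
      rw [← mul_pow]
      congr 1
      rw [div_mul_div_comm, mul_comm (N (i + 3)) (B i), ← div_mul_div_comm,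
        div_self (hNz (i + 3) (by omega)), mul_one]
    -- Step D : telescoping
    have stepD : (∏ i ∈ Finset.range (m + 1), (N (i + 2) / N (i + 1)) ^ (dd (n - 1) (m - i)))
        * ∏ i ∈ Finset.range m, (N (i + 2) / N (i + 3)) ^ (dd (n - 1) (m - 1 - i))
        = (N 2 / N 1) ^ (dd (n - 1) m) := by
      rw [Finset.prod_range_succ' (fun i => (N (i + 2) / N (i + 1)) ^ (dd (n - 1) (m - i))) m]
      simp only [Nat.sub_zero]
      rw [mul_right_comm]
      have : (∏ i ∈ Finset.range m, (N (i + 1 + 2) / N (i + 1 + 1)) ^ (dd (n - 1) (m - (i + 1))))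
          * ∏ i ∈ Finset.range m, (N (i + 2) / N (i + 3)) ^ (dd (n - 1) (m - 1 - i)) = 1 := by
        rw [← Finset.prod_mul_distrib]
        apply Finset.prod_eq_one
        intro i hi
        have h1 : m - (i + 1) = m - 1 - i := by omega
        rw [h1, show i + 1 + 2 = i + 3 from rfl, show i + 1 + 1 = i + 2 from rfl, ← mul_pow,
          div_mul_div_comm, mul_comm (N (i + 2)) (N (i + 3)), div_self
            (mul_ne_zero (hNz (i + 3) (by omega)) (hNz (i + 2) (by omega))), one_pow]
      rw [this, one_mul]
    calc ∏ i ∈ Finset.range (m + 1), (N (i + 2) / B i) ^ (dd n (m - i))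
        = ((∏ i ∈ Finset.range (m + 1), (N (i + 2) / N (i + 1)) ^ (dd (n - 1) (m - i)))
            * ∏ i ∈ Finset.range m, (N (i + 2) / N (i + 3)) ^ (dd (n - 1) (m - 1 - i)))
          * ((∏ i ∈ Finset.range (m + 1), (N (i + 1) / B i) ^ (dd (n - 1) (m - i)))
            * ∏ i ∈ Finset.range m, (N (i + 3) / B i) ^ (dd (n - 1) (m - 1 - i))) := by
          rw [stepA, stepB, stepC]; ring
      _ = (N 2 / N 1) ^ (dd (n - 1) m)
            * (∏ i ∈ Finset.range (m + 1), (N (i + 1) / B i) ^ (dd (n - 1) (m - i)))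
            * ∏ i ∈ Finset.range m, (N (i + 3) / B i) ^ (dd (n - 1) (m - 1 - i)) := by
          rw [stepD]; ring
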